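/- Let n, m ≥ 1 be integers, 1 ≤ l ≤ m and 0 < α < mn. Let g, h_1, …, h_m be measurable functions on ℝ^n such that ∫_{ℝ^n} ∫_{(ℝ^n)^m} |g(x)| ∏_{j=1}^m |h_j(y_j)| / (|x−y_1|+⋯+|x−y_m|)^{mn−α} dy_1⋯dy_m dx < ∞. Then Π_l(g, h_1, …, h_m) belongs to L^1(ℝ^n) and ∫_{ℝ^n} Π_l(g, h_1, …, h_m)(x) dx = 0. -/

import Mathlib

open MeasureTheory ENNReal Filter Metric

noncomputable section

/-- Euclidean space `ℝⁿ`. -/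
abbrev En (n : ℕ) : Type := EuclideanSpace ℝ (Fin n)

/-- The multilinear fractional integral operator `I_α`. -/
def mfi (n m : ℕ) (α : ℝ) (f : Fin m → En n → ℝ) (x : En n) : ℝ :=
  ∫ y : Fin m → En n, (∏ j, f j (y j)) / (∑ j, dist x (y j)) ^ ((m * n : ℝ) - α)

/-- The `l`-th partial adjoint `(I_α^*)_l`. -/
def mfiAdj (n m : ℕ) (α : ℝ) (l : Fin m) (f : Fin m → En n → ℝ) (x : En n) : ℝ :=
  ∫ y : Fin m → En n, (∏ j, f j (y j)) /
    (dist (y l) x + ∑ j ∈ Finset.univ.erase l, dist (y l) (y j)) ^ ((m * n : ℝ) - α)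

/-- The multilinear "multiplication" operator `Π_l`. -/
def PiOp (n m : ℕ) (α : ℝ) (l : Fin m) (g : En n → ℝ) (h : Fin m → En n → ℝ)
    (x : En n) : ℝ :=
  h l x * mfiAdj n m α l (Function.update h l g) x - g x * mfi n m α h x

/-- The `l`-th commutator `[b, I_α]_l`. -/
def commOp (n m : ℕ) (α : ℝ) (l : Fin m) (b : En n → ℝ) (f : Fin m → En n → ℝ)
    (x : En n) : ℝ :=
  mfi n m α (Function.update f l (fun y => b y * f l y)) x - b x * mfi n m α f x

/-- The weighted Lebesgue norm `‖f‖_{L^p(w)}`. -/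
def wNorm (n : ℕ) (p : ℝ) (w f : En n → ℝ) : ℝ≥0∞ :=
  (∫⁻ x, ENNReal.ofReal (|f x| ^ p * w x)) ^ (1 / p)

/-- The (axis-parallel, closed) cube with corner `c` and side `r`. -/
def cube (n : ℕ) (c : En n) (r : ℝ) : Set (En n) := {y | ∀ i, c i ≤ y i ∧ y i ≤ c i + r}

/-- The weight `μ_{ω⃗} = ∏ ω_i^q`. -/
def muw (n m : ℕ) (q : ℝ) (ω : Fin m → En n → ℝ) (x : En n) : ℝ := ∏ i, ω i x ^ q

/-- The multilinear weight class `A_{P⃗,q}`. -/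
def MemApq (n m : ℕ) (p : Fin m → ℝ) (q : ℝ) (ω : Fin m → En n → ℝ) : Prop :=
  (∀ i x, 0 ≤ ω i x) ∧ (∀ i, LocallyIntegrable (ω i) volume) ∧
  ∃ A : ℝ≥0∞, A ≠ ⊤ ∧ ∀ (c : En n) (r : ℝ), 0 < r →
    ((volume (cube n c r))⁻¹ * ∫⁻ x in cube n c r, ENNReal.ofReal (muw n m q ω x)) *
      ∏ i, (((volume (cube n c r))⁻¹ *
          ∫⁻ x in cube n c r, ENNReal.ofReal (ω i x ^ (-(p i / (p i - 1))))) ^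
        (q / (p i / (p i - 1)))) ≤ A

/-- A `(1,t,0)`-atom (with `t = ⊤` allowed). -/
def Atom10 (n : ℕ) (t : ℝ≥0∞) (a : En n → ℝ) : Prop :=
  Measurable a ∧ ∃ (c : En n) (r : ℝ), 0 < r ∧ (∀ x, x ∉ ball c r → a x = 0) ∧
    eLpNorm a t volume ≤ (volume (ball c r)) ^ (1 / t.toReal - 1) ∧
    (∫ x, a x) = 0

/-- The atomic `H^1` norm of `f`. -/
def H1norm (n : ℕ) (f : En n → ℝ) : ℝ≥0∞ :=
  ⨅ (lam : ℕ → ℝ) (a : ℕ → En n → ℝ)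
    (_ : (∀ k, Atom10 n ⊤ (a k)) ∧
      Tendsto (fun K => eLpNorm (fun x => f x - ∑ k ∈ Finset.range K, lam k * a k x) 1 volume)
        atTop (nhds 0)),
    ∑' k, ENNReal.ofReal |lam k|

/-- The `BMO` norm of `b`. -/
def BMOnorm (n : ℕ) (b : En n → ℝ) : ℝ≥0∞ :=
  ⨆ (c : En n) (r : ℝ) (_ : 0 < r),
    (volume (cube n c r))⁻¹ *
      ∫⁻ x in cube n c r, ENNReal.ofReal |b x - ⨍ y in cube n c r, b y|

/-- Auxiliary swap map. -/
def swFun (n m : ℕ) (l : Fin m) : En n × (Fin m → En n) → En n × (Fin m → En n) :=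
  fun z => (z.2 l, Function.update z.2 l z.1)

theorem swFun_measurable (n m : ℕ) (l : Fin m) : Measurable (swFun n m l) := by
  apply Measurable.prod
  · exact (measurable_pi_apply l).comp measurable_snd
  · exact measurable_update'.comp (measurable_snd.prodMk measurable_fst)

theorem swFun_involutive (n m : ℕ) (l : Fin m) : Function.Involutive (swFun n m l) := by
  intro z
  simp [swFun, Function.update_idem]

theorem swFun_mp (n m : ℕ) (l : Fin m) :
    MeasurePreserving (swFun n m l) (volume : Measure (En n × (Fin m → En n))) volume := by
  classical
  set A := En n with hA
  let e0 : (Fin (m+1) → A) ≃ᵐ A × (Fin m → A) :=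
    MeasurableEquiv.piFinSuccAbove (fun _ => A) 0
  let σ0 : Fin (m+1) ≃ Fin (m+1) := Equiv.swap 0 l.succ
  let perm : (Fin (m+1) → A) ≃ᵐ (Fin (m+1) → A) :=
    MeasurableEquiv.piCongrLeft (fun _ => A) σ0
  have h0 : MeasurePreserving e0 (volume : Measure (Fin (m+1) → A)) volume :=
    volume_preserving_piFinSuccAbove (fun _ => A) 0
  have hperm : MeasurePreserving perm.symm (volume : Measure (Fin (m+1) → A)) volume :=
    (volume_measurePreserving_piCongrLeft (fun _ => A) σ0).symm perm
  have key : swFun n m l = ⇑e0 ∘ ⇑perm.symm ∘ ⇑e0.symm := by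
    funext z
    obtain ⟨x, y⟩ := z
    have hw : (e0.symm (x, y) : Fin (m+1) → A) = Fin.insertNth 0 x y := rfl
    have hps : ∀ w : Fin (m+1) → A, (perm.symm w : Fin (m+1) → A) = fun a => w (σ0 a) := by
      intro w; funext a
      simp [perm, MeasurableEquiv.piCongrLeft, σ0]
    have he0 : ∀ w : Fin (m+1) → A, (e0 w : A × (Fin m → A)) =
        (w 0, fun j => w ((0 : Fin (m+1)).succAbove j)) := fun w => rfl
    simp only [Function.comp_apply, hw, hps, he0]
    refine Prod.ext ?_ ?_
    · show y l = Fin.insertNth (α := fun _ : Fin (m+1) => A) 0 x y (σ0 0)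
      have : σ0 0 = l.succ := Equiv.swap_apply_left 0 l.succ
      rw [this, ← Fin.zero_succAbove l, Fin.insertNth_apply_succAbove]
    · show Function.update y l x =
          fun j => Fin.insertNth (α := fun _ : Fin (m+1) => A) 0 x y (σ0 ((0:Fin (m+1)).succAbove j))
      funext j
      rw [Fin.zero_succAbove]
      by_cases hj : j = l
      · subst hj
        have : σ0 j.succ = 0 := Equiv.swap_apply_right 0 j.succ
        rw [this, Function.update_self, Fin.insertNth_apply_same]
      · have h1 : j.succ ≠ 0 := Fin.succ_ne_zero j
        have h2 : j.succ ≠ l.succ := fun hc => hj (Fin.succ_injective m hc)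
        have : σ0 j.succ = j.succ := Equiv.swap_apply_of_ne_of_ne h1 h2
        rw [this, Function.update_of_ne hj, ← Fin.zero_succAbove j,
          Fin.insertNth_apply_succAbove]
  rw [key]
  exact h0.comp (hperm.comp (h0.symm e0))


/-- Under a joint integrability condition, `Π_l(g, h₁, …, h_m)` is integrable
and has vanishing integral. -/
theorem piOp_integrable_integral_zero (n m : ℕ) (hn : 1 ≤ n) (hm : 1 ≤ m) (l : Fin m)
    (α : ℝ) (hα0 : 0 < α) (hα1 : α < m * n)
    (g : En n → ℝ) (h : Fin m → En n → ℝ)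
    (hg : Measurable g) (hh : ∀ i, Measurable (h i))
    (hint : (∫⁻ x, ∫⁻ y : Fin m → En n,
        ENNReal.ofReal (|g x| * (∏ j, |h j (y j)|) /
          (∑ j, dist x (y j)) ^ ((m * n : ℝ) - α))) < ⊤) :
    Integrable (PiOp n m α l g h) volume ∧ (∫ x, PiOp n m α l g h x) = 0 := by
  classical
  set p : ℝ := (m * n : ℝ) - α with hpdef
  set F : En n × (Fin m → En n) → ℝ :=
    fun z => (g z.1 * ∏ j, h j (z.2 j)) / (∑ j, dist z.1 (z.2 j)) ^ p with hFdef
  have mF : Measurable F := by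
    apply Measurable.div
    · exact (hg.comp measurable_fst).mul
        (Finset.measurable_prod Finset.univ fun j _ =>
          (hh j).comp ((measurable_pi_apply j).comp measurable_snd))
    · exact (Finset.measurable_sum Finset.univ fun j _ =>
        measurable_fst.dist ((measurable_pi_apply j).comp measurable_snd)).pow measurable_const
  have hnorm : ∀ z : En n × (Fin m → En n), ENNReal.ofReal ‖F z‖ =
      ENNReal.ofReal (|g z.1| * (∏ j, |h j (z.2 j)|) / (∑ j, dist z.1 (z.2 j)) ^ p) := by
    intro z
    congr 1
    rw [Real.norm_eq_abs, hFdef]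
    rw [abs_div, abs_mul, Finset.abs_prod,
      abs_of_nonneg (Real.rpow_nonneg (Finset.sum_nonneg fun j _ => dist_nonneg) p)]
  have hFint : Integrable F volume := by
    refine ⟨mF.aestronglyMeasurable, ?_⟩
    rw [hasFiniteIntegral_iff_norm]
    calc (∫⁻ z, ENNReal.ofReal ‖F z‖)
        = ∫⁻ z, ENNReal.ofReal ‖F z‖ ∂((volume : Measure (En n)).prod volume) := by
          rw [← Measure.volume_eq_prod]
      _ = ∫⁻ x, ∫⁻ y, ENNReal.ofReal ‖F (x, y)‖ := by
          exact lintegral_prod _ (mF.norm.ennreal_ofReal.aemeasurable)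
      _ = ∫⁻ x, ∫⁻ y : Fin m → En n, ENNReal.ofReal (|g x| * (∏ j, |h j (y j)|) /
            (∑ j, dist x (y j)) ^ p) := by
          exact lintegral_congr fun x => lintegral_congr fun y => hnorm (x, y)
      _ < ⊤ := hint
  -- the swapped version
  have hFσint : Integrable (F ∘ swFun n m l) volume :=
    ((swFun_mp n m l).integrable_comp mF.aestronglyMeasurable).2 hFint
  have hEmb : MeasurableEmbedding (swFun n m l) :=
    (MeasurableEquiv.ofInvolutive (swFun n m l) (swFun_involutive n m l)
      (swFun_measurable n m l)).measurableEmbedding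
  have hIntEq : ∫ z, F (swFun n m l z) = ∫ z, F z :=
    (swFun_mp n m l).integral_comp hEmb F
  -- pointwise identities
  have A1 : ∀ x, g x * mfi n m α h x = ∫ y : Fin m → En n, F (x, y) := by
    intro x
    rw [mfi, ← integral_const_mul]
    refine integral_congr_ae (Filter.Eventually.of_forall fun y => ?_)
    simp only [hFdef, mul_div_assoc, hpdef]
  have A2 : ∀ x, h l x * mfiAdj n m α l (Function.update h l g) x
      = ∫ y : Fin m → En n, F (swFun n m l (x, y)) := by
    intro x
    rw [mfiAdj, ← integral_const_mul]
    refine integral_congr_ae (Filter.Eventually.of_forall fun y => ?_)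
    have hprod1 : ∏ j, Function.update h l g j (y j)
        = g (y l) * ∏ j ∈ Finset.univ.erase l, h j (y j) := by
      rw [← Finset.mul_prod_erase Finset.univ (fun j => Function.update h l g j (y j))
        (Finset.mem_univ l), Function.update_self]
      congr 1
      refine Finset.prod_congr rfl fun j hj => ?_
      rw [Function.update_of_ne (Finset.ne_of_mem_erase hj)]
    have hprod2 : ∏ j, h j (Function.update y l x j)
        = h l x * ∏ j ∈ Finset.univ.erase l, h j (y j) := by
      rw [← Finset.mul_prod_erase Finset.univ (fun j => h j (Function.update y l x j))
        (Finset.mem_univ l), Function.update_self]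
      congr 1
      refine Finset.prod_congr rfl fun j hj => ?_
      rw [Function.update_of_ne (Finset.ne_of_mem_erase hj)]
    have hsum : ∑ j, dist (y l) (Function.update y l x j)
        = dist (y l) x + ∑ j ∈ Finset.univ.erase l, dist (y l) (y j) := by
      rw [← Finset.add_sum_erase Finset.univ (fun j => dist (y l) (Function.update y l x j))
        (Finset.mem_univ l), Function.update_self]
      congr 1
      refine Finset.sum_congr rfl fun j hj => ?_
      rw [Function.update_of_ne (Finset.ne_of_mem_erase hj)]
    show h l x * ((∏ j, Function.update h l g j (y j)) / _) = F (y l, Function.update y l x)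
    rw [hFdef]
    simp only
    rw [hprod1, hprod2, hsum, ← mul_div_assoc]
    congr 1
    ring
  -- assemble
  have hPiOp : PiOp n m α l g h
      = fun x => (∫ y : Fin m → En n, F (swFun n m l (x, y)))
        - (∫ y : Fin m → En n, F (x, y)) := by
    funext x
    rw [PiOp, A1 x, A2 x]
  have hFint' : Integrable F ((volume : Measure (En n)).prod volume) := by
    rwa [← Measure.volume_eq_prod]
  have hFσint' : Integrable (F ∘ swFun n m l) ((volume : Measure (En n)).prod volume) := by
    rwa [← Measure.volume_eq_prod]
  have Int1 : Integrable (fun x => ∫ y : Fin m → En n, F (x, y)) volume :=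
    hFint'.integral_prod_left
  have Int2 : Integrable (fun x => ∫ y : Fin m → En n, F (swFun n m l (x, y))) volume :=
    hFσint'.integral_prod_left
  constructor
  · rw [hPiOp]
    exact Int2.sub Int1
  · rw [hPiOp]
    rw [integral_sub Int2 Int1]
    have e1 : ∫ x, ∫ y : Fin m → En n, F (x, y)
        = ∫ z, F z ∂((volume : Measure (En n)).prod volume) := by
      rw [integral_integral (f := fun x (y : Fin m → En n) => F (x, y)) hFint']
    have e2 : ∫ x, ∫ y : Fin m → En n, F (swFun n m l (x, y))
        = ∫ z, F (swFun n m l z) ∂((volume : Measure (En n)).prod volume) := by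
      rw [integral_integral (f := fun x (y : Fin m → En n) => F (swFun n m l (x, y)))
        hFσint']
    rw [e1, e2, ← Measure.volume_eq_prod, hIntEq, sub_self]
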